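/- Let (X,d) be a metric space, x₀, x, y ∈ X, and let g(w,z) = log tanh d(w,z) for w ≠ z. Then for any sequence z_n with d(x₀,z_n) → ∞ (hence d(x,z_n), d(y,z_n) → ∞), the ratio g(y,z_n)/g(x,z_n) satisfies limsup_n g(y,z_n)/g(x,z_n) ≤ e^{2 d(x,y)}. -/

import Mathlib

open Filter Real

lemma tanh_formula (t : ℝ) :
    Real.tanh t = (1 - Real.exp (-(2*t))) / (1 + Real.exp (-(2*t))) := by
  rw [Real.tanh_eq_sinh_div_cosh, Real.sinh_eq, Real.cosh_eq]
  have h1 : Real.exp t * Real.exp (-t) = 1 := by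
    rw [← Real.exp_add]; simp
  have h2 : Real.exp (-(2*t)) = Real.exp (-t) * Real.exp (-t) := by
    rw [← Real.exp_add]; ring_nf
  have hp : 0 < Real.exp t + Real.exp (-t) :=
    add_pos (Real.exp_pos _) (Real.exp_pos _)
  have hp2 : 0 < 1 + Real.exp (-(2*t)) := by positivity
  field_simp
  rw [show -(t*2) = -(2*t) by ring, h2]
  linear_combination (2 * Real.exp (-t)) * h1

lemma neg_log_frac {u : ℝ} (h0 : 0 < u) (h1 : u < 1) :
    -Real.log ((1 - u) / (1 + u)) = Real.log (1 + u) - Real.log (1 - u) := by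
  rw [Real.log_div (by linarith) (by linarith)]
  ring

lemma neg_log_lower {u : ℝ} (h0 : 0 < u) (h1 : u < 1) :
    2*u - u^2 ≤ -Real.log ((1 - u) / (1 + u)) := by
  rw [neg_log_frac h0 h1]
  have hA : 1 - (1 + u)⁻¹ ≤ Real.log (1 + u) :=
    Real.one_sub_inv_le_log_of_pos (by linarith)
  have hB : Real.log (1 - u) ≤ -u := by
    have := Real.log_le_sub_one_of_pos (x := 1 - u) (by linarith)
    linarith
  have hC : u - u^2 ≤ 1 - (1 + u)⁻¹ := by
    have h : (1 + u)⁻¹ ≤ 1 - u + u^2 := by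
      rw [inv_le_iff_one_le_mul₀ (by linarith)]
      nlinarith
    linarith
  linarith

lemma neg_log_upper {u : ℝ} (h0 : 0 < u) (h1 : u < 1) :
    -Real.log ((1 - u) / (1 + u)) ≤ 2*u / (1 - u) := by
  rw [← Real.log_inv]
  have hinv : ((1 - u) / (1 + u))⁻¹ = (1 + u) / (1 - u) := by
    rw [inv_div]
  rw [hinv]
  have hne : (0:ℝ) < 1 - u := by linarith
  have := Real.log_le_sub_one_of_pos (x := (1 + u) / (1 - u))
    (div_pos (by linarith) hne)
  have heq : (1 + u) / (1 - u) - 1 = 2*u / (1 - u) := by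
    field_simp; ring
  linarith [heq ▸ this]

/-- With `g(w,z) = log tanh d(w,z)`, along any sequence `z_n` with `d(x₀,z_n) → ∞` one has
`limsup_n g(y,z_n)/g(x,z_n) ≤ e^{2 d(x,y)}`. -/
theorem stmt8 {X : Type*} [MetricSpace X] (x₀ x y : X) (z : ℕ → X)
    (hz : Tendsto (fun n => dist x₀ (z n)) atTop atTop) :
    Filter.limsup
      (fun n => Real.log (Real.tanh (dist y (z n))) / Real.log (Real.tanh (dist x (z n))))
      atTop ≤ Real.exp (2 * dist x y) := by
  set D := dist x y with hD
  set a : ℕ → ℝ := fun n => dist x (z n) with ha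
  set b : ℕ → ℝ := fun n => dist y (z n) with hb
  have hta : Tendsto a atTop atTop := by
    apply tendsto_atTop_mono' _ _ (tendsto_atTop_add_const_right atTop (-dist x₀ x) hz)
    filter_upwards with n
    have := dist_triangle x₀ x (z n)
    simp only [ha]
    linarith [dist_comm x₀ x ▸ this]
  have htb : Tendsto b atTop atTop := by
    apply tendsto_atTop_mono' _ _ (tendsto_atTop_add_const_right atTop (-dist x₀ y) hz)
    filter_upwards with n
    have := dist_triangle x₀ y (z n)
    simp only [hb]
    linarith
  -- u n, v n small
  have hu0 : Tendsto (fun n => Real.exp (-(2 * a n))) atTop (nhds 0) :=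
    Real.tendsto_exp_atBot.comp (tendsto_neg_atBot_iff.2 (hta.const_mul_atTop two_pos))
  have hv0 : Tendsto (fun n => Real.exp (-(2 * b n))) atTop (nhds 0) :=
    Real.tendsto_exp_atBot.comp (tendsto_neg_atBot_iff.2 (htb.const_mul_atTop two_pos))
  set g : ℕ → ℝ := fun n =>
    Real.exp (2 * D) / ((1 - Real.exp (-(2 * b n))) * (1 - Real.exp (-(2 * a n)) / 2)) with hg
  have hgt : Tendsto g atTop (nhds (Real.exp (2 * D))) := by
    have : Tendsto (fun n => (1 - Real.exp (-(2 * b n))) * (1 - Real.exp (-(2 * a n)) / 2))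
        atTop (nhds 1) := by
      have := ((tendsto_const_nhds (x := (1:ℝ))).sub hv0).mul
        ((tendsto_const_nhds (x := (1:ℝ))).sub (hu0.div_const 2))
      simpa using this
    have h := (tendsto_const_nhds (x := Real.exp (2 * D))).div this (by norm_num)
    rw [div_one] at h
    exact h
  have hev : ∀ᶠ n in atTop,
      Real.log (Real.tanh (b n)) / Real.log (Real.tanh (a n)) ≤ g n := by
    have h1 : ∀ᶠ n in atTop, Real.exp (-(2 * a n)) < 1/2 := hu0.eventually_lt_const (by norm_num)
    have h2 : ∀ᶠ n in atTop, Real.exp (-(2 * b n)) < 1/2 := hv0.eventually_lt_const (by norm_num)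
    filter_upwards [h1, h2] with n hu hv
    set u := Real.exp (-(2 * a n)) with hudef
    set v := Real.exp (-(2 * b n)) with hvdef
    have hu0' : 0 < u := Real.exp_pos _
    have hv0' : 0 < v := Real.exp_pos _
    have hu1 : u < 1 := by linarith
    have hv1 : v < 1 := by linarith
    have hfa : Real.tanh (a n) = (1 - u) / (1 + u) := by
      rw [tanh_formula]
    have hfb : Real.tanh (b n) = (1 - v) / (1 + v) := by
      rw [tanh_formula]
    -- v ≤ exp(2D) * u
    have hvu : v ≤ Real.exp (2 * D) * u := by
      rw [hvdef, hudef, ← Real.exp_add]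
      apply Real.exp_le_exp.2
      have := dist_triangle x y (z n)
      simp only [ha, hb, hD]; linarith
    have hLa : 2*u - u^2 ≤ -Real.log (Real.tanh (a n)) := hfa ▸ neg_log_lower hu0' hu1
    have hLb : -Real.log (Real.tanh (b n)) ≤ 2*v / (1 - v) := hfb ▸ neg_log_upper hv0' hv1
    have hLapos : 0 < -Real.log (Real.tanh (a n)) := by nlinarith
    have key : (-Real.log (Real.tanh (b n))) / (-Real.log (Real.tanh (a n))) ≤ g n := by
      have step1 : (-Real.log (Real.tanh (b n))) / (-Real.log (Real.tanh (a n)))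
          ≤ (2*v / (1 - v)) / (2*u - u^2) := by
        exact div_le_div₀ (div_nonneg (by linarith) (by linarith)) hLb (by nlinarith) hLa
      refine step1.trans ?_
      rw [hg]
      simp only [← hudef, ← hvdef]
      rw [div_le_div_iff₀ (by nlinarith) (by nlinarith)]
      have hne : (1:ℝ) - v ≠ 0 := by linarith
      have hsimp : 2 * v / (1 - v) * ((1 - v) * (1 - u / 2)) = v * (2 - u) := by
        calc 2 * v / (1 - v) * ((1 - v) * (1 - u / 2))
            = 2 * v * (1 - u / 2) * ((1 - v) / (1 - v)) := by ring
          _ = v * (2 - u) := by rw [div_self hne]; ring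
      rw [hsimp]
      have h2u : (0:ℝ) ≤ 2 - u := by linarith
      have := mul_le_mul_of_nonneg_right hvu h2u
      nlinarith
    calc Real.log (Real.tanh (b n)) / Real.log (Real.tanh (a n))
        = (-Real.log (Real.tanh (b n))) / (-Real.log (Real.tanh (a n))) := by
          rw [neg_div_neg_eq]
      _ ≤ g n := key
  have hcobdd : IsCoboundedUnder (· ≤ ·) atTop
      (fun n => Real.log (Real.tanh (b n)) / Real.log (Real.tanh (a n))) := by
    apply isCoboundedUnder_le_of_eventually_le atTop (x := 0)
    have h1 : ∀ᶠ n in atTop, Real.exp (-(2 * a n)) < 1/2 := hu0.eventually_lt_const (by norm_num)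
    have h2 : ∀ᶠ n in atTop, Real.exp (-(2 * b n)) < 1/2 := hv0.eventually_lt_const (by norm_num)
    filter_upwards [h1, h2] with n hu hv
    have hue : (0:ℝ) < Real.exp (-(2 * a n)) := Real.exp_pos _
    have hve : (0:ℝ) < Real.exp (-(2 * b n)) := Real.exp_pos _
    have hla : Real.log (Real.tanh (a n)) ≤ 0 := by
      apply Real.log_nonpos
      · rw [tanh_formula]; exact div_nonneg (by linarith) (by linarith)
      · rw [tanh_formula]
        apply div_le_one_of_le₀ (by linarith) (by linarith)
    have hlb : Real.log (Real.tanh (b n)) ≤ 0 := by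
      apply Real.log_nonpos
      · rw [tanh_formula]; exact div_nonneg (by linarith) (by linarith)
      · rw [tanh_formula]
        apply div_le_one_of_le₀ (by linarith) (by linarith)
    exact div_nonneg_iff.2 (Or.inr ⟨hlb, hla⟩)
  calc Filter.limsup (fun n => Real.log (Real.tanh (b n)) / Real.log (Real.tanh (a n))) atTop
      ≤ Filter.limsup g atTop := limsup_le_limsup hev hcobdd hgt.isBoundedUnder_le
    _ = Real.exp (2 * D) := hgt.limsup_eq
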